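/- Let 0 < α_min ≤ α_max < 2 and 0 < m ≤ M < ∞. For every ε > 0 there exists an integer r ≥ 1 such that, with ᾱ_1, …, ᾱ_r the Chebyshev points of [α_min, α_max] and L_1, …, L_r the associated Lagrange interpolation basis polynomials, one has |a^t − Σ_{q=1}^r L_q(t) a^{ᾱ_q}| ≤ ε for all a ∈ [m, M] and all t ∈ [α_min, α_max]. -/

import Mathlib

open Real

noncomputable section

/-- The `i`-th Chebyshev point of the interval `[p,q]` among `r` points: the image of the
root `cos((2i+1)π/(2r))` of the degree-`r` Chebyshev polynomial of the first kind under
the affine map from `[-1,1]` onto `[p,q]`. -/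
def chebNode (p q : ℝ) (r : ℕ) (i : Fin r) : ℝ :=
  (p + q) / 2 + (q - p) / 2 * Real.cos ((2 * (i : ℕ) + 1) * Real.pi / (2 * r))

/-- The Lagrange interpolation basis polynomial associated with the Chebyshev nodes. -/
def lagBasis (p q : ℝ) (r : ℕ) (i : Fin r) (t : ℝ) : ℝ :=
  ∏ m ∈ Finset.univ.erase i,
    (t - chebNode p q r m) / (chebNode p q r i - chebNode p q r m)

section aux

open Polynomial Set

lemma genRolle : ∀ (n : ℕ) (g : ℝ → ℝ), ContDiff ℝ (⊤ : ℕ∞) g →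
    ∀ (x : Fin (n+1) → ℝ), StrictMono x → (∀ i, g (x i) = 0) →
    ∃ ξ ∈ Set.Icc (x 0) (x (Fin.last n)), iteratedDeriv n g ξ = 0 := by
  intro n
  induction n with
  | zero =>
    intro g hg x hx hz
    exact ⟨x 0, ⟨le_refl _, le_refl _⟩, by simpa using hz 0⟩
  | succ n ih =>
    intro g hg x hx hz
    have hrolle : ∀ i : Fin (n+1), ∃ y ∈ Set.Ioo (x i.castSucc) (x i.succ), deriv g y = 0 := by
      intro i
      exact exists_deriv_eq_zero (hx (Fin.castSucc_lt_succ : i.castSucc < i.succ))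
        (hg.continuous.continuousOn) ((hz i.castSucc).trans (hz i.succ).symm)
    choose y hy hdy using hrolle
    have hymono : StrictMono y := by
      intro i j hij
      calc y i < x i.succ := (hy i).2
        _ ≤ x j.castSucc := by
            apply hx.monotone
            simp only [Fin.le_def, Fin.lt_def, Fin.coe_castSucc, Fin.val_succ] at hij ⊢
            omega
        _ < y j := (hy j).1
    obtain ⟨ξ, hξ, hd⟩ := ih (deriv g) (contDiff_infty_iff_deriv.mp hg).2 y hymono hdy
    refine ⟨ξ, ⟨le_of_lt ?_, le_of_lt ?_⟩, by rwa [iteratedDeriv_succ']⟩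
    · calc x 0 ≤ x ((0 : Fin (n+1)).castSucc) := by
            apply hx.monotone; simp [Fin.le_def]
        _ < y 0 := (hy 0).1
        _ ≤ ξ := hξ.1
    · calc ξ ≤ y (Fin.last n) := hξ.2
        _ < x (Fin.last n).succ := (hy _).2
        _ ≤ x (Fin.last (n+1)) := by apply hx.monotone; simp [Fin.le_def]

lemma genRolleFinset (n : ℕ) (g : ℝ → ℝ) (hg : ContDiff ℝ (⊤ : ℕ∞) g) (p q : ℝ)
    (s : Finset ℝ) (hcard : s.card = n + 1) (hs : ∀ x ∈ s, x ∈ Set.Icc p q)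
    (hz : ∀ x ∈ s, g x = 0) :
    ∃ ξ ∈ Set.Icc p q, iteratedDeriv n g ξ = 0 := by
  set x : Fin (n+1) → ℝ := fun i => (s.orderIsoOfFin hcard i : ℝ) with hxdef
  have hmem : ∀ i, x i ∈ s := fun i => (s.orderIsoOfFin hcard i).2
  have hmono : StrictMono x := fun i j hij =>
    Subtype.coe_lt_coe.mpr ((s.orderIsoOfFin hcard).strictMono hij)
  obtain ⟨ξ, hξ, hd⟩ := genRolle n g hg x hmono (fun i => hz _ (hmem i))
  exact ⟨ξ, ⟨le_trans (hs _ (hmem 0)).1 hξ.1, le_trans hξ.2 (hs _ (hmem _)).2⟩, hd⟩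

lemma iterExpPoly (b c : ℝ) (R : Polynomial ℝ) (n : ℕ) :
    iteratedDeriv n (fun s => b * Real.exp (c * s) + Polynomial.eval s R) =
      fun s => b * c ^ n * Real.exp (c * s) + Polynomial.eval s (Polynomial.derivative^[n] R) := by
  induction n generalizing b R with
  | zero => simp
  | succ n ih =>
    rw [iteratedDeriv_succ']
    have hd : deriv (fun s => b * Real.exp (c * s) + Polynomial.eval s R) =
        fun s => (b * c) * Real.exp (c * s) + Polynomial.eval s (Polynomial.derivative R) := by
      funext s
      have h1 : HasDerivAt (fun s : ℝ => b * Real.exp (c * s)) (b * (Real.exp (c * s) * c)) s := by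
        simpa using (((hasDerivAt_id s).const_mul c).exp).const_mul b
      have h2 : HasDerivAt (fun s : ℝ => Polynomial.eval s R)
          (Polynomial.eval s (Polynomial.derivative R)) s := Polynomial.hasDerivAt R s
      rw [show deriv (fun s => b * Real.exp (c * s) + Polynomial.eval s R) s = _ from (h1.add h2).deriv]; ring
    rw [hd, ih]
    funext s
    simp only [Function.iterate_succ_apply]
    ring

lemma contDiff_polyEval (p : Polynomial ℝ) :
    ContDiff ℝ (⊤ : ℕ∞) fun x : ℝ => Polynomial.eval x p := by
  induction p using Polynomial.induction_on' with
  | add p q hp hq => simpa [Polynomial.eval_add] using hp.add hq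
  | monomial n a =>
    simpa [Polynomial.eval_monomial] using (contDiff_const (c := a)).mul (contDiff_id.pow n)

lemma iterDerivAdd (A B : Polynomial ℝ) (k : ℕ) :
    Polynomial.derivative^[k] (A + B) =
      Polynomial.derivative^[k] A + Polynomial.derivative^[k] B := by
  induction k generalizing A B with
  | zero => rfl
  | succ k ih => simp [Function.iterate_succ_apply, ih]

lemma iterDerivMonic (P : Polynomial ℝ) (n : ℕ) (hn : 0 < n) (hmo : P.Monic)
    (hd : P.natDegree = n) : Polynomial.derivative^[n] P = Polynomial.C ((n.factorial : ℕ) : ℝ) := by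
  have h1 : P.eraseLead + Polynomial.C P.leadingCoeff * Polynomial.X ^ P.natDegree = P :=
    Polynomial.eraseLead_add_C_mul_X_pow P
  rw [hmo.leadingCoeff, hd, map_one, one_mul] at h1
  have h2 : Polynomial.derivative^[n] P.eraseLead = 0 := by
    rcases Polynomial.eraseLead_natDegree_lt_or_eraseLead_eq_zero P with h | h
    · exact Polynomial.iterate_derivative_eq_zero (by omega)
    · simp [h]
  have h3 : Polynomial.derivative^[n] (Polynomial.X ^ n : Polynomial ℝ) =
      Polynomial.C ((n.factorial : ℕ) : ℝ) := by
    rw [Polynomial.iterate_derivative_X_pow_eq_smul]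
    rw [Nat.descFactorial_self, Nat.sub_self, pow_zero]
    simp [Polynomial.smul_eq_C_mul]
  calc Polynomial.derivative^[n] P
      = Polynomial.derivative^[n] (P.eraseLead + Polynomial.X ^ n) := by rw [h1]
    _ = Polynomial.C ((n.factorial : ℕ) : ℝ) := by rw [iterDerivAdd, h2, h3, zero_add]

-- node lemmas
lemma chebNode_lt {p q : ℝ} (hpq : p < q) {r : ℕ} {i j : Fin r} (hij : i < j) :
    chebNode p q r j < chebNode p q r i := by
  have hr : (0:ℝ) < r := by exact_mod_cast i.pos
  have hπ := Real.pi_pos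
  have hmem : ∀ k : Fin r, (2 * (k:ℕ) + 1) * Real.pi / (2 * r) ∈ Set.Icc 0 Real.pi := by
    intro k
    have hk : ((k:ℕ):ℝ) + 1 ≤ (r:ℝ) := by exact_mod_cast k.isLt
    constructor
    · positivity
    · rw [div_le_iff₀ (by positivity)]
      nlinarith
  have hθ : (2 * (i:ℕ) + 1) * Real.pi / (2 * r) < (2 * (j:ℕ) + 1) * Real.pi / (2 * r) := by
    have hij' : ((i:ℕ):ℝ) < ((j:ℕ):ℝ) := by exact_mod_cast hij
    rw [div_lt_div_iff₀ (by positivity) (by positivity)]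
    have h5 := mul_lt_mul_of_pos_right (mul_lt_mul_of_pos_right
      (by linarith : 2*((i:ℕ):ℝ)+1 < 2*((j:ℕ):ℝ)+1) hπ) (by positivity : (0:ℝ) < 2*r)
    linarith
  have hcos := Real.strictAntiOn_cos (hmem i) (hmem j) hθ
  have h2 : (0:ℝ) < (q - p)/2 := by linarith
  unfold chebNode
  nlinarith [mul_lt_mul_of_pos_left hcos h2]

end aux

lemma chebNode_inj {p q : ℝ} (hpq : p < q) {r : ℕ} :
    Function.Injective (chebNode p q r) := by
  intro i j h
  by_contra hne
  rcases lt_or_gt_of_ne hne with hlt | hlt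
  · exact absurd h (ne_of_gt (chebNode_lt hpq hlt))
  · exact absurd h (ne_of_lt (chebNode_lt hpq hlt))

lemma chebNode_mem {p q : ℝ} (hpq : p ≤ q) {r : ℕ} (i : Fin r) :
    chebNode p q r i ∈ Set.Icc p q := by
  have h1 := Real.neg_one_le_cos ((2 * ((i:ℕ):ℝ) + 1) * Real.pi / (2 * r))
  have h2 := Real.cos_le_one ((2 * ((i:ℕ):ℝ) + 1) * Real.pi / (2 * r))
  unfold chebNode
  constructor <;> push_cast <;> nlinarith

lemma lagBasis_eq_one {p q : ℝ} (hpq : p < q) {r : ℕ} (i : Fin r) :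
    lagBasis p q r i (chebNode p q r i) = 1 := by
  apply Finset.prod_eq_one
  intro m hm
  have hne : chebNode p q r i - chebNode p q r m ≠ 0 := by
    rw [sub_ne_zero]
    exact fun h => (Finset.ne_of_mem_erase hm) ((chebNode_inj hpq) h).symm
  exact div_self hne

lemma lagBasis_eq_zero {p q : ℝ} {r : ℕ} {i j : Fin r} (hij : i ≠ j) :
    lagBasis p q r i (chebNode p q r j) = 0 := by
  apply Finset.prod_eq_zero (Finset.mem_erase.mpr ⟨hij.symm, Finset.mem_univ j⟩)
  simp

lemma lagBasis_sum_delta {p q : ℝ} (hpq : p < q) {r : ℕ} (j : Fin r) (v : Fin r → ℝ) :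
    ∑ i : Fin r, lagBasis p q r i (chebNode p q r j) * v i = v j := by
  rw [Finset.sum_eq_single j]
  · rw [lagBasis_eq_one hpq, one_mul]
  · intro i _ hij
    rw [lagBasis_eq_zero hij, zero_mul]
  · intro h; exact absurd (Finset.mem_univ j) h


/-- Uniform low-rank approximation of `(a,t) ↦ a^t` by Chebyshev–Lagrange interpolation
in the exponent: for every `ε > 0` there is `r ≥ 1` with
`|a^t - Σ_q L_q(t) a^{ᾱ_q}| ≤ ε` for all `a ∈ [m,M]` and `t ∈ [α_min, α_max]`. -/
theorem stmt8 (αmin αmax : ℝ) (h1 : 0 < αmin) (h2 : αmin ≤ αmax) (h3 : αmax < 2)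
    (m M : ℝ) (hm : 0 < m) (hmM : m ≤ M) :
    ∀ ε : ℝ, 0 < ε → ∃ r : ℕ, 1 ≤ r ∧
      ∀ a ∈ Set.Icc m M, ∀ t ∈ Set.Icc αmin αmax,
        |a ^ t - ∑ i : Fin r, lagBasis αmin αmax r i t * a ^ chebNode αmin αmax r i| ≤ ε := by
  intro ε hε
  rcases eq_or_lt_of_le h2 with heq | hpq
  · -- degenerate case αmin = αmax
    refine ⟨1, le_refl 1, ?_⟩
    intro a ha t ht
    rw [← heq] at ht
    have hta : t = αmin := le_antisymm ht.2 ht.1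
    have hnode : chebNode αmin αmax 1 0 = αmin := by
      unfold chebNode; rw [← heq]; ring
    have hbasis : lagBasis αmin αmax 1 0 t = 1 := by
      unfold lagBasis; simp
    rw [Fin.sum_univ_one, hnode, hbasis, one_mul, hta, sub_self, abs_zero]
    exact hε.le
  · -- main case
    have hM : 0 < M := lt_of_lt_of_le hm hmM
    set K := |Real.log m| + |Real.log M| + 1 with hKdef
    have hK0 : 0 < K := by positivity
    set Cb := M^2 + 1 with hCbdef
    have hCb0 : (0:ℝ) < Cb := by positivity
    obtain ⟨r, hrN, hr1⟩ : ∃ n : ℕ, (2*K)^n / (n.factorial : ℝ) < ε / Cb ∧ 1 ≤ n := by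
      have htd := FloorSemiring.tendsto_pow_div_factorial_atTop (K := ℝ) (2*K)
      have hev := htd.eventually_lt_const (div_pos hε hCb0)
      exact (hev.and (Filter.eventually_ge_atTop 1)).exists
    refine ⟨r, hr1, ?_⟩
    intro a ha t ht
    have ha0 : 0 < a := lt_of_lt_of_le hm ha.1
    set c := Real.log a with hcdef
    have hrw : ∀ x : ℝ, a ^ x = Real.exp (c * x) := fun x => by
      rw [Real.rpow_def_of_pos ha0]
    have hcK : |c| ≤ K := by
      have hl1 : Real.log m ≤ c := Real.log_le_log hm ha.1
      have hl2 : c ≤ Real.log M := Real.log_le_log ha0 ha.2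
      rw [abs_le]
      constructor
      · have := neg_abs_le (Real.log m); have := abs_nonneg (Real.log M); linarith
      · have := le_abs_self (Real.log M); have := abs_nonneg (Real.log m); linarith
    set T : Fin r → ℝ := chebNode αmin αmax r with hTdef
    by_cases htn : ∃ j, t = T j
    · obtain ⟨j, rfl⟩ := htn
      have hdel : ∑ i : Fin r, lagBasis αmin αmax r i (T j) * a ^ T i = a ^ T j :=
        lagBasis_sum_delta hpq j (fun i => a ^ T i)
      rw [hdel, sub_self, abs_zero]
      exact hε.le
    · classical
      set Q : Polynomial ℝ := ∑ i : Fin r, (∏ mm ∈ Finset.univ.erase i,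
          ((Polynomial.X - Polynomial.C (T mm)) * Polynomial.C ((T i - T mm)⁻¹))) *
          Polynomial.C (Real.exp (c * T i)) with hQdef
      set W : Polynomial ℝ := ∏ i : Fin r, (Polynomial.X - Polynomial.C (T i)) with hWdef
      have hevalQ : ∀ s : ℝ, Polynomial.eval s Q =
          ∑ i : Fin r, lagBasis αmin αmax r i s * Real.exp (c * T i) := by
        intro s
        rw [hQdef]
        simp only [Polynomial.eval_finset_sum, Polynomial.eval_mul, Polynomial.eval_prod,
          Polynomial.eval_sub, Polynomial.eval_X, Polynomial.eval_C]
        unfold lagBasis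
        simp [div_eq_mul_inv]
        rfl
      have hevalW : ∀ s : ℝ, Polynomial.eval s W = ∏ i : Fin r, (s - T i) := by
        intro s; rw [hWdef]; simp [Polynomial.eval_prod]
      have hWt : Polynomial.eval t W ≠ 0 := by
        rw [hevalW]
        apply Finset.prod_ne_zero_iff.mpr
        intro i _
        exact sub_ne_zero.mpr (fun h => htn ⟨i, h⟩)
      set lam : ℝ := (Real.exp (c*t) - Polynomial.eval t Q) / Polynomial.eval t W with hlamdef
      set R : Polynomial ℝ := -Q - Polynomial.C lam * W with hRdef
      set g : ℝ → ℝ := fun s => 1 * Real.exp (c * s) + Polynomial.eval s R with hgdef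
      have hgsmooth : ContDiff ℝ (⊤:ℕ∞) g := by
        apply ContDiff.add
        · exact contDiff_const.mul (Real.contDiff_exp.comp (contDiff_const.mul contDiff_id))
        · exact contDiff_polyEval R
      have hgval : ∀ s, g s =
          Real.exp (c*s) - Polynomial.eval s Q - lam * Polynomial.eval s W := by
        intro s; rw [hgdef]; simp only [hRdef]; simp; ring
      set s0 : Finset ℝ := insert t (Finset.image T Finset.univ) with hs0def
      have htnot : t ∉ Finset.image T Finset.univ := by
        simp only [Finset.mem_image]
        rintro ⟨j, _, hj⟩
        exact htn ⟨j, hj.symm⟩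
      have hcard : s0.card = r + 1 := by
        rw [hs0def, Finset.card_insert_of_notMem htnot,
          Finset.card_image_of_injective _ (chebNode_inj hpq), Finset.card_univ,
          Fintype.card_fin]
      have hsub : ∀ x ∈ s0, x ∈ Set.Icc αmin αmax := by
        intro x hx
        rcases Finset.mem_insert.mp hx with rfl | hx
        · exact ht
        · obtain ⟨j, _, rfl⟩ := Finset.mem_image.mp hx
          exact chebNode_mem h2 j
      have hQdelta : ∀ j : Fin r, Polynomial.eval (T j) Q = Real.exp (c * T j) := by
        intro j; rw [hevalQ]
        exact lagBasis_sum_delta hpq j (fun i => Real.exp (c * T i))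
      have hWnode : ∀ j : Fin r, Polynomial.eval (T j) W = 0 := by
        intro j; rw [hevalW]
        exact Finset.prod_eq_zero (Finset.mem_univ j) (sub_self _)
      have hzero : ∀ x ∈ s0, g x = 0 := by
        intro x hx
        rcases Finset.mem_insert.mp hx with rfl | hx
        · rw [hgval, hlamdef, div_mul_cancel₀ _ hWt]; ring
        · obtain ⟨j, _, rfl⟩ := Finset.mem_image.mp hx
          rw [hgval, hQdelta, hWnode, mul_zero, sub_zero, sub_self]
      obtain ⟨ξ, hξ, hdg⟩ := genRolleFinset r g hgsmooth αmin αmax s0 hcard hsub hzero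
      have hQdeg : Q.natDegree < r := by
        have hle : Q.natDegree ≤ r - 1 := by
          rw [hQdef]
          apply Polynomial.natDegree_sum_le_of_forall_le
          intro i _
          apply le_trans (Polynomial.natDegree_mul_le)
          rw [Polynomial.natDegree_C, add_zero]
          apply le_trans (Polynomial.natDegree_prod_le _ _)
          apply le_trans (Finset.sum_le_card_nsmul _ _ 1 ?_)
          · rw [smul_eq_mul, mul_one, Finset.card_erase_of_mem (Finset.mem_univ i),
              Finset.card_univ, Fintype.card_fin]
          · intro x _
            apply le_trans (Polynomial.natDegree_mul_le)
            rw [Polynomial.natDegree_C, add_zero]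
            exact le_of_eq (Polynomial.natDegree_X_sub_C _)
        omega
      have hWmonic : W.Monic :=
        Polynomial.monic_prod_of_monic _ _ (fun i _ => Polynomial.monic_X_sub_C _)
      have hWdeg : W.natDegree = r := by
        rw [hWdef, Polynomial.natDegree_prod_of_monic _ _
          (fun i _ => Polynomial.monic_X_sub_C _)]
        simp [Polynomial.natDegree_X_sub_C]
      have hiterR : Polynomial.derivative^[r] R =
          Polynomial.C (-(lam * ((r.factorial : ℕ) : ℝ))) := by
        rw [hRdef, sub_eq_add_neg, iterDerivAdd, Polynomial.iterate_derivative_neg,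
          Polynomial.iterate_derivative_neg, Polynomial.iterate_derivative_C_mul,
          Polynomial.iterate_derivative_eq_zero hQdeg,
          iterDerivMonic W r (by omega) hWmonic hWdeg]
        rw [neg_zero, zero_add, ← Polynomial.C_mul, ← Polynomial.C_neg]
      rw [iterExpPoly 1 c R r, hiterR] at hdg
      simp only [Polynomial.eval_C, one_mul] at hdg
      have hfact : (0:ℝ) < ((r.factorial : ℕ) : ℝ) := by exact_mod_cast r.factorial_pos
      have hlameq : lam = c^r * Real.exp (c * ξ) / ((r.factorial : ℕ) : ℝ) := by
        field_simp
        linarith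
      have hexpr : a ^ t - ∑ i : Fin r, lagBasis αmin αmax r i t * a ^ chebNode αmin αmax r i
          = lam * Polynomial.eval t W := by
        have hsum : ∑ i : Fin r, lagBasis αmin αmax r i t * a ^ chebNode αmin αmax r i
            = Polynomial.eval t Q := by
          rw [hevalQ]
          congr 1
          funext i
          rw [hrw]
        rw [hsum, hrw t, hlamdef, div_mul_cancel₀ _ hWt]
      rw [hexpr, abs_mul]
      have hξexp : Real.exp (c * ξ) ≤ Cb := by
        have hξ0 : 0 ≤ ξ := le_trans h1.le hξ.1
        have hξ2 : ξ ≤ 2 := le_trans hξ.2 h3.le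
        rw [← hrw ξ, hCbdef]
        rcases le_or_gt a 1 with h | h
        · have hb := Real.rpow_le_one ha0.le h hξ0
          have := sq_nonneg M
          linarith
        · calc a ^ ξ ≤ a ^ (2:ℝ) := Real.rpow_le_rpow_of_exponent_le h.le hξ2
            _ = a ^ (2:ℕ) := by rw [← Real.rpow_natCast a 2]; norm_num
            _ ≤ M ^ (2:ℕ) := pow_le_pow_left₀ ha0.le ha.2 2
            _ ≤ M^2 + 1 := by norm_num
      have habs : |lam| ≤ K^r * Cb / ((r.factorial : ℕ) : ℝ) := by
        rw [hlameq, abs_div, abs_mul, abs_pow, Real.abs_exp, abs_of_pos hfact]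
        gcongr
      have hWb : |Polynomial.eval t W| ≤ 2^r := by
        rw [hevalW, Finset.abs_prod]
        calc ∏ i : Fin r, |t - T i| ≤ ∏ _i : Fin r, (2:ℝ) := by
              apply Finset.prod_le_prod (fun i _ => abs_nonneg _)
              intro i _
              have hTi := chebNode_mem h2 i
              rw [abs_le]
              constructor <;> [linarith [ht.1, hTi.2]; linarith [ht.2, hTi.1]]
          _ = 2^r := by rw [Finset.prod_const, Finset.card_univ, Fintype.card_fin]
      calc |lam| * |Polynomial.eval t W| ≤ (K^r * Cb / ((r.factorial : ℕ) : ℝ)) * 2^r := by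
            apply mul_le_mul habs hWb (abs_nonneg _) (by positivity)
        _ = Cb * ((2*K)^r / ((r.factorial : ℕ) : ℝ)) := by
            rw [mul_pow]; ring
        _ ≤ Cb * (ε / Cb) := by
            apply mul_le_mul_of_nonneg_left hrN.le hCb0.le
        _ = ε := by field_simp
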